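/- arXiv:1009.4389 — 2 statements merged into one kernel-verified Lean document; each statement's English description precedes it below -/
import Mathlib

section
/- Let δ > 0, 0 < β < δ, θ > 0, τ > 0, and let (a_k)_{k∈ℤ_+^d} and (b_k)_{k∈ℤ_+^d} be nonnegative sequences with b_k ≤ M (∑_{s∈ℤ_+^d} (2^{-δ|(k-s)_+|_1} a_s)^τ)^{1/τ} for all k, where (k-s)_+ denotes coordinatewise positive part. Then (∑_k (2^{β|k|_1} b_k)^θ)^{1/θ} ≤ C M (∑_k (2^{β|k|_1} a_k)^θ)^{1/θ} with C depending only on β, δ, θ, τ, d. -/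
open scoped ENNReal

lemma tsum_pi_prod : ∀ (n : ℕ) (g : Fin n → ℕ → ℝ≥0∞),
    ∑' f : Fin n → ℕ, ∏ i, g i (f i) = ∏ i, ∑' m : ℕ, g i m := by
  intro n
  induction n with
  | zero =>
    intro g
    rw [tsum_eq_single (default : Fin 0 → ℕ) (fun b hb => absurd (Subsingleton.elim b default) hb)]
    simp
  | succ n ih =>
    intro g
    rw [← (Fin.consEquiv (fun _ : Fin (n+1) => ℕ)).tsum_eq, Fin.prod_univ_succ]
    rw [ENNReal.tsum_prod']
    have key : ∀ (x : ℕ) (y : Fin n → ℕ),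
        (∏ i, g i ((Fin.consEquiv fun _ => ℕ) (x, y) i)) = g 0 x * ∏ i : Fin n, g i.succ (y i) := by
      intro x y
      rw [Fin.prod_univ_succ]
      simp [Fin.consEquiv]
    calc ∑' (x : ℕ) (y : Fin n → ℕ), ∏ i, g i ((Fin.consEquiv fun _ => ℕ) (x, y) i)
        = ∑' (x : ℕ) (y : Fin n → ℕ), g 0 x * ∏ i : Fin n, g i.succ (y i) := by
          congr 1; ext x; congr 1; ext y; exact key x y
      _ = ∑' (x : ℕ), g 0 x * ∑' (y : Fin n → ℕ), ∏ i : Fin n, g i.succ (y i) := by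
          congr 1; ext x; rw [ENNReal.tsum_mul_left]
      _ = (∑' m, g 0 m) * ∏ i : Fin n, ∑' m, g i.succ m := by
          rw [ih fun i => g i.succ, ENNReal.tsum_mul_right]

lemma geom_dist_sum {q : ℝ≥0∞} (hq : q ≤ 1) (m : ℕ) :
    ∑' n : ℕ, q ^ ((m - n) + (n - m)) ≤ 2 * (1 - q)⁻¹ := by
  set f : ℕ → ℝ≥0∞ := fun n => q ^ ((m - n) + (n - m)) with hf
  have hsplit : ∑' (x : {n : ℕ | m ≤ n}), f x + ∑' (x : ↥{n : ℕ | m ≤ n}ᶜ), f x = ∑' n, f n :=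
    Summable.tsum_add_tsum_compl ENNReal.summable ENNReal.summable
  have h1 : ∑' (x : {n : ℕ | m ≤ n}), f x ≤ ∑' j : ℕ, q ^ j := by
    refine Summable.tsum_le_tsum_of_inj (fun x => x.val - m) ?_ (fun _ _ => bot_le) ?_
      ENNReal.summable ENNReal.summable
    · rintro ⟨x, hx⟩ ⟨y, hy⟩ hxy
      simp only [Set.mem_setOf_eq] at hx hy
      simp only [Subtype.mk.injEq] at hxy ⊢
      omega
    · rintro ⟨x, hx⟩
      simp only [Set.mem_setOf_eq] at hx
      have : m - x = 0 := by omega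
      simp [hf, this]
  have h2 : ∑' (x : ↥{n : ℕ | m ≤ n}ᶜ), f x ≤ ∑' j : ℕ, q ^ j := by
    refine Summable.tsum_le_tsum_of_inj (fun x => m - x.val - 1) ?_ (fun _ _ => bot_le) ?_
      ENNReal.summable ENNReal.summable
    · rintro ⟨x, hx⟩ ⟨y, hy⟩ hxy
      simp only [Set.mem_compl_iff, Set.mem_setOf_eq, not_le] at hx hy
      simp only [Subtype.mk.injEq] at hxy ⊢
      omega
    · rintro ⟨x, hx⟩
      simp only [Set.mem_compl_iff, Set.mem_setOf_eq, not_le] at hx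
      have hx0 : x - m = 0 := by omega
      simp only [hf, hx0, add_zero]
      exact pow_le_pow_right_of_le_one' hq (by omega)
  calc ∑' n, f n = _ := hsplit.symm
    _ ≤ (∑' j : ℕ, q ^ j) + ∑' j : ℕ, q ^ j := add_le_add h1 h2
    _ = 2 * (1 - q)⁻¹ := by rw [ENNReal.tsum_geometric, two_mul]

lemma tsum_weight_jensen {ι : Type*} (w v : ι → ℝ≥0∞) {p : ℝ} (hp : 1 ≤ p) {A : ℝ≥0∞}
    (hA : ∑' i, w i ≤ A) :
    (∑' i, w i * v i) ^ p ≤ A ^ (p - 1) * ∑' i, w i * v i ^ p := by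
  have hp0 : (0:ℝ) < p := lt_of_lt_of_le one_pos hp
  have step : ∑' i, w i * v i ≤ A ^ (1 - p⁻¹) * (∑' i, w i * v i ^ p) ^ p⁻¹ := by
    refine Summable.tsum_le_of_sum_le ENNReal.summable fun s => ?_
    calc ∑ i ∈ s, w i * v i
        ≤ (∑ i ∈ s, w i) ^ (1 - p⁻¹) * (∑ i ∈ s, w i * v i ^ p) ^ p⁻¹ :=
          ENNReal.inner_le_weight_mul_Lp_of_nonneg s hp w v
      _ ≤ A ^ (1 - p⁻¹) * (∑' i, w i * v i ^ p) ^ p⁻¹ :=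
          mul_le_mul' (ENNReal.rpow_le_rpow ((ENNReal.sum_le_tsum s).trans hA)
              (by rw [sub_nonneg]; exact inv_le_one_of_one_le₀ hp))
            (ENNReal.rpow_le_rpow (ENNReal.sum_le_tsum s) (by positivity))
  calc (∑' i, w i * v i) ^ p ≤ (A ^ (1 - p⁻¹) * (∑' i, w i * v i ^ p) ^ p⁻¹) ^ p :=
        ENNReal.rpow_le_rpow step hp0.le
    _ = A ^ (p - 1) * ∑' i, w i * v i ^ p := by
        rw [ENNReal.mul_rpow_of_nonneg _ _ hp0.le, ← ENNReal.rpow_mul, ← ENNReal.rpow_mul,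
          show (1 - p⁻¹) * p = p - 1 by field_simp,
          show p⁻¹ * p = 1 from inv_mul_cancel₀ hp0.ne', ENNReal.rpow_one]

lemma tsum_rpow_le_rpow_tsum {ι : Type*} (y : ι → ℝ≥0∞) {r : ℝ} (hr : 1 ≤ r) :
    ∑' i, y i ^ r ≤ (∑' i, y i) ^ r := by
  have hr0 : (0:ℝ) < r := lt_of_lt_of_le one_pos hr
  set S := ∑' i, y i with hS
  rcases eq_or_ne S ⊤ with h | h
  · rw [h, ENNReal.top_rpow_of_pos hr0]; exact le_top
  rcases eq_or_ne S 0 with h0 | h0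
  · have : ∀ i, y i = 0 := by
      intro i
      have := le_trans (ENNReal.le_tsum i) h0.le
      simpa using this
    simp [this, ENNReal.zero_rpow_of_pos hr0]
  calc ∑' i, y i ^ r ≤ ∑' i, y i * S ^ (r - 1) := by
        refine ENNReal.tsum_le_tsum fun i => ?_
        rcases eq_or_ne (y i) 0 with hy | hy
        · simp [hy, ENNReal.zero_rpow_of_pos hr0]
        · have hyt : y i ≠ ⊤ := ne_top_of_le_ne_top h (ENNReal.le_tsum i)
          calc y i ^ r = y i ^ (1:ℝ) * y i ^ (r - 1) := by
                rw [← ENNReal.rpow_add _ _ hy hyt]; norm_num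
            _ ≤ y i * S ^ (r - 1) := by
                rw [ENNReal.rpow_one]
                exact mul_le_mul' le_rfl
                  (ENNReal.rpow_le_rpow (ENNReal.le_tsum i) (by linarith))
    _ = S * S ^ (r - 1) := by rw [ENNReal.tsum_mul_right]
    _ = S ^ (1:ℝ) * S ^ (r - 1) := by rw [ENNReal.rpow_one]
    _ = S ^ r := by rw [← ENNReal.rpow_add _ _ h0 h]; norm_num

lemma enn_rpow_sum {ι : Type*} (s : Finset ι) (f : ι → ℝ) :
    (2:ℝ≥0∞) ^ (∑ i ∈ s, f i) = ∏ i ∈ s, (2:ℝ≥0∞) ^ f i := by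
  classical
  induction s using Finset.cons_induction with
  | empty => simp
  | cons a s ha ih =>
    rw [Finset.sum_cons, Finset.prod_cons, ENNReal.rpow_add _ _ (by norm_num) (by norm_num), ih]
lemma hardy_core (d : ℕ) (γ ε p : ℝ) (hγ : 0 < γ) (hγε : γ < ε) (hp : 1 ≤ p) :
    ∃ A : ℝ≥0∞, 1 ≤ A ∧ A ≠ ⊤ ∧ ∀ u : (Fin d → ℕ) → ℝ≥0∞,
      ∑' k : Fin d → ℕ, ((2:ℝ≥0∞) ^ (γ * ∑ i, (k i : ℝ)) *
          ∑' s : Fin d → ℕ, (2:ℝ≥0∞) ^ (-(ε * ∑ i, ((k i - s i : ℕ) : ℝ))) * u s) ^ p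
        ≤ A ^ p * ∑' k : Fin d → ℕ, ((2:ℝ≥0∞) ^ (γ * ∑ i, (k i : ℝ)) * u k) ^ p := by
  have h2 : (2:ℝ≥0∞) ≠ 0 := by norm_num
  have h2t : (2:ℝ≥0∞) ≠ ⊤ := by norm_num
  set c : ℝ := min γ (ε - γ) with hc
  have hc0 : 0 < c := lt_min hγ (by linarith)
  set q : ℝ≥0∞ := (2:ℝ≥0∞) ^ (-c) with hqdef
  have hq1 : q < 1 := ENNReal.rpow_lt_one_of_one_lt_of_neg (by norm_num) (by linarith)
  set A₁ : ℝ≥0∞ := 2 * (1 - q)⁻¹ with hA₁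
  have hA₁top : A₁ ≠ ⊤ := by
    rw [hA₁]
    exact ENNReal.mul_ne_top (by norm_num) (by simp [tsub_eq_zero_iff_le, not_le, hq1])
  have hA₁1 : (1:ℝ≥0∞) ≤ A₁ := by
    have h1 : (1:ℝ≥0∞) ≤ (1 - q)⁻¹ := ENNReal.one_le_inv.mpr tsub_le_self
    calc (1:ℝ≥0∞) = 1 * 1 := (one_mul 1).symm
      _ ≤ 2 * (1 - q)⁻¹ := mul_le_mul' (by norm_num) h1
  refine ⟨A₁ ^ d, one_le_pow_of_one_le' hA₁1 d, ENNReal.pow_ne_top hA₁top, fun u => ?_⟩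
  set A : ℝ≥0∞ := A₁ ^ d with hA
  have hA1 : (1:ℝ≥0∞) ≤ A := one_le_pow_of_one_le' hA₁1 d
  have hAtop : A ≠ ⊤ := ENNReal.pow_ne_top hA₁top
  -- single-coordinate kernel
  set κ : ℕ → ℕ → ℝ≥0∞ := fun m n => (2:ℝ≥0∞) ^ (γ * m - γ * n - ε * ((m - n : ℕ) : ℝ)) with hκ
  have hκq : ∀ m n, κ m n ≤ q ^ ((m - n) + (n - m)) := by
    intro m n
    have hexp : γ * m - γ * n - ε * ((m - n : ℕ) : ℝ) ≤ -c * (((m - n) + (n - m) : ℕ) : ℝ) := by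
      rcases le_total n m with h | h
      · have e1 : ((m - n : ℕ) : ℝ) = (m : ℝ) - n := by
          push_cast [Nat.cast_sub h]; ring
        have e2 : (((m - n) + (n - m) : ℕ) : ℝ) = (m : ℝ) - n := by
          have : n - m = 0 := by omega
          rw [this]; push_cast [Nat.cast_sub h]; ring
        rw [e1, e2]
        have hmn : (0:ℝ) ≤ (m:ℝ) - n := by
          have := Nat.cast_le (α := ℝ).mpr h; linarith
        have hcε : c ≤ ε - γ := min_le_right _ _
        nlinarith
      · have e1 : ((m - n : ℕ) : ℝ) = 0 := by
          have : m - n = 0 := by omega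
          rw [this]; norm_num
        have e2 : (((m - n) + (n - m) : ℕ) : ℝ) = (n : ℝ) - m := by
          have h0 : m - n = 0 := by omega
          rw [h0]; push_cast [Nat.cast_sub h]; ring
        rw [e1, e2]
        have hmn : (0:ℝ) ≤ (n:ℝ) - m := by
          have := Nat.cast_le (α := ℝ).mpr h; linarith
        have hcγ : c ≤ γ := min_le_left _ _
        nlinarith
    calc κ m n ≤ (2:ℝ≥0∞) ^ (-c * (((m - n) + (n - m) : ℕ) : ℝ)) :=
          ENNReal.rpow_le_rpow_of_exponent_le (by norm_num) hexp
      _ = q ^ ((m - n) + (n - m)) := by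
          rw [ENNReal.rpow_mul, ENNReal.rpow_natCast]
  have hrow : ∀ m, ∑' n : ℕ, κ m n ≤ A₁ :=
    fun m => le_trans (ENNReal.tsum_le_tsum fun n => hκq m n) (geom_dist_sum hq1.le m)
  have hcol : ∀ n, ∑' m : ℕ, κ m n ≤ A₁ := by
    intro n
    refine le_trans (ENNReal.tsum_le_tsum fun m => le_trans (hκq m n) (le_of_eq ?_))
      (geom_dist_sum hq1.le n)
    rw [add_comm]
  -- the full kernel
  set K : (Fin d → ℕ) → (Fin d → ℕ) → ℝ≥0∞ := fun k s => ∏ i, κ (k i) (s i) with hK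
  have hrowK : ∀ k, ∑' s : Fin d → ℕ, K k s ≤ A := by
    intro k
    rw [hK, tsum_pi_prod d (fun i n => κ (k i) n)]
    calc ∏ i : Fin d, ∑' n : ℕ, κ (k i) n ≤ ∏ _i : Fin d, A₁ :=
          Finset.prod_le_prod' fun i _ => hrow (k i)
      _ = A := by rw [Finset.prod_const, Finset.card_univ, Fintype.card_fin]
  have hcolK : ∀ s, ∑' k : Fin d → ℕ, K k s ≤ A := by
    intro s
    rw [hK, tsum_pi_prod d (fun i m => κ m (s i))]
    calc ∏ i : Fin d, ∑' m : ℕ, κ m (s i) ≤ ∏ _i : Fin d, A₁ :=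
          Finset.prod_le_prod' fun i _ => hcol (s i)
      _ = A := by rw [Finset.prod_const, Finset.card_univ, Fintype.card_fin]
  -- identity
  set v : (Fin d → ℕ) → ℝ≥0∞ := fun s => (2:ℝ≥0∞) ^ (γ * ∑ i, (s i : ℝ)) * u s with hv
  have hid : ∀ k : Fin d → ℕ,
      (2:ℝ≥0∞) ^ (γ * ∑ i, (k i : ℝ)) *
        ∑' s : Fin d → ℕ, (2:ℝ≥0∞) ^ (-(ε * ∑ i, ((k i - s i : ℕ) : ℝ))) * u s
      = ∑' s : Fin d → ℕ, K k s * v s := by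
    intro k
    rw [← ENNReal.tsum_mul_left]
    congr 1
    funext s
    have hKeq : K k s = (2:ℝ≥0∞) ^ (γ * (∑ i, (k i : ℝ)) - γ * (∑ i, (s i : ℝ))
        - ε * ∑ i, ((k i - s i : ℕ) : ℝ)) := by
      rw [hK]
      rw [show γ * (∑ i, (k i : ℝ)) - γ * (∑ i, (s i : ℝ)) - ε * ∑ i, ((k i - s i : ℕ) : ℝ)
          = ∑ i : Fin d, (γ * (k i : ℝ) - γ * (s i : ℝ) - ε * ((k i - s i : ℕ) : ℝ)) by
        rw [Finset.sum_sub_distrib, Finset.sum_sub_distrib, ← Finset.mul_sum, ← Finset.mul_sum,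
          ← Finset.mul_sum]]
      rw [enn_rpow_sum]
    rw [hKeq]
    rw [← mul_assoc, ← ENNReal.rpow_add _ _ h2 h2t, ← mul_assoc, ← ENNReal.rpow_add _ _ h2 h2t]
    congr 2
    ring
  calc ∑' k : Fin d → ℕ, ((2:ℝ≥0∞) ^ (γ * ∑ i, (k i : ℝ)) *
          ∑' s : Fin d → ℕ, (2:ℝ≥0∞) ^ (-(ε * ∑ i, ((k i - s i : ℕ) : ℝ))) * u s) ^ p
      = ∑' k : Fin d → ℕ, (∑' s : Fin d → ℕ, K k s * v s) ^ p := by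
        congr 1; funext k; rw [hid k]
    _ ≤ ∑' k : Fin d → ℕ, A ^ (p - 1) * ∑' s : Fin d → ℕ, K k s * v s ^ p :=
        ENNReal.tsum_le_tsum fun k => tsum_weight_jensen (K k) v hp (hrowK k)
    _ = A ^ (p - 1) * ∑' s : Fin d → ℕ, (∑' k : Fin d → ℕ, K k s) * v s ^ p := by
        rw [ENNReal.tsum_mul_left]
        congr 1
        rw [ENNReal.tsum_comm]
        congr 1; funext s
        rw [ENNReal.tsum_mul_right]
    _ ≤ A ^ (p - 1) * ∑' s : Fin d → ℕ, A * v s ^ p := by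
        refine mul_le_mul' le_rfl (ENNReal.tsum_le_tsum fun s => ?_)
        exact mul_le_mul' (hcolK s) le_rfl
    _ = A ^ p * ∑' s : Fin d → ℕ, v s ^ p := by
        rw [ENNReal.tsum_mul_left, ← mul_assoc]
        congr 1
        have hA0 : A ≠ 0 := by
          intro h0; rw [h0] at hA1; exact (by norm_num : ¬ ((1:ℝ≥0∞) ≤ 0)) hA1
        calc A ^ (p - 1) * A = A ^ (p - 1) * A ^ (1:ℝ) := by rw [ENNReal.rpow_one]
          _ = A ^ p := by rw [← ENNReal.rpow_add _ _ hA0 hAtop]; norm_num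
lemma lp_embed {ι : Type*} (x : ι → ℝ≥0∞) {ρ τ : ℝ} (hρ : 0 < ρ) (hρτ : ρ ≤ τ) :
    (∑' i, x i ^ τ) ^ (1/τ) ≤ (∑' i, x i ^ ρ) ^ (1/ρ) := by
  have hτ0 : 0 < τ := lt_of_lt_of_le hρ hρτ
  have hr : 1 ≤ τ / ρ := (one_le_div hρ).mpr hρτ
  have h1 : ∀ i, x i ^ τ = (x i ^ ρ) ^ (τ / ρ) := by
    intro i
    rw [← ENNReal.rpow_mul]
    congr 1
    field_simp
  calc (∑' i, x i ^ τ) ^ (1/τ) = (∑' i, (x i ^ ρ) ^ (τ/ρ)) ^ (1/τ) := by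
        congr 1; exact tsum_congr h1
    _ ≤ ((∑' i, x i ^ ρ) ^ (τ/ρ)) ^ (1/τ) :=
        ENNReal.rpow_le_rpow (tsum_rpow_le_rpow_tsum _ hr) (by positivity)
    _ = (∑' i, x i ^ ρ) ^ (1/ρ) := by
        rw [← ENNReal.rpow_mul]
        congr 1
        field_simp


/-- Mixed (d-dimensional) discrete Hardy inequality with kernel `2^{-δ|(k-s)_+|_1}`. -/
theorem mixed_discrete_hardy (d : ℕ) (δ β θ τ : ℝ) (hδ : 0 < δ) (hβ : 0 < β)
    (hβδ : β < δ) (hθ : 0 < θ) (hτ : 0 < τ) :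
    ∃ C : ℝ, 0 < C ∧ ∀ (M : ℝ) (a b : (Fin d → ℕ) → ℝ),
      0 ≤ M → (∀ k, 0 ≤ a k) → (∀ k, 0 ≤ b k) →
      (∀ k, b k ≤ M * (∑' s : Fin d → ℕ,
          ((2 : ℝ) ^ (-δ * ∑ i, ((k i - s i : ℕ) : ℝ)) * a s) ^ τ) ^ (1 / τ)) →
      Summable (fun k : Fin d → ℕ => ((2 : ℝ) ^ (β * ∑ i, (k i : ℝ)) * a k) ^ θ) →
      (∑' k : Fin d → ℕ, ((2 : ℝ) ^ (β * ∑ i, (k i : ℝ)) * b k) ^ θ) ^ (1 / θ) ≤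
        C * M * (∑' k : Fin d → ℕ, ((2 : ℝ) ^ (β * ∑ i, (k i : ℝ)) * a k) ^ θ) ^ (1 / θ) := by
  -- parameters
  set ρ : ℝ := min τ θ with hρdef
  have hρ0 : 0 < ρ := lt_min hτ hθ
  have hρτ : ρ ≤ τ := min_le_left _ _
  have hρθ : ρ ≤ θ := min_le_right _ _
  set p : ℝ := θ / ρ with hpdef
  have hp1 : 1 ≤ p := (one_le_div hρ0).mpr hρθ
  have hp0 : 0 < p := lt_of_lt_of_le one_pos hp1
  set γ : ℝ := β * ρ with hγdef
  set ε : ℝ := δ * ρ with hεdef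
  obtain ⟨A, hA1, hAtop, hcore⟩ := hardy_core d γ ε p (by positivity)
    (by rw [hγdef, hεdef]; exact mul_lt_mul_of_pos_right hβδ hρ0) hp1
  have hAp_top : A ^ p ≠ ⊤ := ENNReal.rpow_ne_top_of_nonneg hp0.le hAtop
  have hAp_1 : (1:ℝ≥0∞) ≤ A ^ p := by
    calc (1:ℝ≥0∞) = 1 ^ p := (ENNReal.one_rpow p).symm
      _ ≤ A ^ p := ENNReal.rpow_le_rpow hA1 hp0.le
  have hApr_1 : (1:ℝ) ≤ (A ^ p).toReal := by
    have := ENNReal.toReal_mono hAp_top hAp_1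
    simpa using this
  refine ⟨((A ^ p).toReal) ^ (1/θ), Real.rpow_pos_of_pos (by linarith) _, ?_⟩
  intro M a b hM ha hb hba hsum
  set E : (Fin d → ℕ) → ℝ≥0∞ := fun k => (2:ℝ≥0∞) ^ (β * ∑ i, (k i : ℝ)) with hE
  -- conversion of the real terms to ENNReal
  have hE_eq : ∀ k : (Fin d → ℕ), ENNReal.ofReal ((2:ℝ) ^ (β * ∑ i, (k i : ℝ))) = E k := by
    intro k
    rw [← ENNReal.ofReal_rpow_of_pos (by norm_num : (0:ℝ) < 2)]
    norm_num [hE]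
  have conv : ∀ (c : (Fin d → ℕ) → ℝ), (∀ k, 0 ≤ c k) → ∀ k : (Fin d → ℕ),
      ENNReal.ofReal (((2:ℝ) ^ (β * ∑ i, (k i : ℝ)) * c k) ^ θ)
        = (E k * ENNReal.ofReal (c k)) ^ θ := by
    intro c hc k
    rw [← ENNReal.ofReal_rpow_of_nonneg (mul_nonneg (Real.rpow_nonneg (by norm_num) _) (hc k)) hθ.le,
      ENNReal.ofReal_mul (Real.rpow_nonneg (by norm_num) _), hE_eq k]
  -- the ENNReal quantities
  set u : (Fin d → ℕ) → ℝ≥0∞ := fun s => ENNReal.ofReal (a s) ^ ρ with hu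
  set Ta : ℝ≥0∞ := ∑' k : (Fin d → ℕ), (E k * ENNReal.ofReal (a k)) ^ θ with hTa
  set Tb : ℝ≥0∞ := ∑' k : (Fin d → ℕ), (E k * ENNReal.ofReal (b k)) ^ θ with hTb
  set Sa : ℝ := ∑' k : (Fin d → ℕ), ((2:ℝ) ^ (β * ∑ i, (k i : ℝ)) * a k) ^ θ with hSa
  have hSa0 : 0 ≤ Sa := tsum_nonneg fun k => Real.rpow_nonneg
    (mul_nonneg (Real.rpow_nonneg (by norm_num) _) (ha k)) _
  have hTa_eq : Ta = ENNReal.ofReal Sa := by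
    rw [hSa, ENNReal.ofReal_tsum_of_nonneg
      (fun k => Real.rpow_nonneg (mul_nonneg (Real.rpow_nonneg (by norm_num) _) (ha k)) _) hsum]
    exact tsum_congr fun k => (conv a ha k).symm
  -- Step 1 : pointwise bound on b in ENNReal
  have step1 : ∀ k : (Fin d → ℕ), (E k * ENNReal.ofReal (b k)) ^ θ
      ≤ ENNReal.ofReal M ^ θ * (E k *
        (∑' s : (Fin d → ℕ), ((2:ℝ≥0∞) ^ (-δ * ∑ i, ((k i - s i : ℕ) : ℝ)) * ENNReal.ofReal (a s)) ^ τ) ^ (1/τ)) ^ θ := by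
    intro k
    have hR0 : 0 ≤ ∑' s : (Fin d → ℕ), ((2:ℝ) ^ (-δ * ∑ i, ((k i - s i : ℕ) : ℝ)) * a s) ^ τ :=
      tsum_nonneg fun s => Real.rpow_nonneg
        (mul_nonneg (Real.rpow_nonneg (by norm_num) _) (ha s)) _
    have h1 : ENNReal.ofReal (b k) ≤ ENNReal.ofReal M *
        (∑' s : (Fin d → ℕ), ((2:ℝ≥0∞) ^ (-δ * ∑ i, ((k i - s i : ℕ) : ℝ)) * ENNReal.ofReal (a s)) ^ τ) ^ (1/τ) := by
      refine le_trans (ENNReal.ofReal_le_ofReal (hba k)) ?_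
      rw [ENNReal.ofReal_mul hM]
      refine mul_le_mul' le_rfl ?_
      rw [← ENNReal.ofReal_rpow_of_nonneg hR0 (by positivity)]
      refine ENNReal.rpow_le_rpow ?_ (by positivity)
      -- ofReal of the real tsum ≤ the ENNReal tsum
      have hconv : ∀ s : (Fin d → ℕ), ENNReal.ofReal (((2:ℝ) ^ (-δ * ∑ i, ((k i - s i : ℕ) : ℝ)) * a s) ^ τ)
          = ((2:ℝ≥0∞) ^ (-δ * ∑ i, ((k i - s i : ℕ) : ℝ)) * ENNReal.ofReal (a s)) ^ τ := by
        intro s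
        rw [← ENNReal.ofReal_rpow_of_nonneg
            (mul_nonneg (Real.rpow_nonneg (by norm_num) _) (ha s)) hτ.le,
          ENNReal.ofReal_mul (Real.rpow_nonneg (by norm_num) _),
          ← ENNReal.ofReal_rpow_of_pos (by norm_num : (0:ℝ) < 2)]
        norm_num
      by_cases hs : Summable fun s : (Fin d → ℕ) => ((2:ℝ) ^ (-δ * ∑ i, ((k i - s i : ℕ) : ℝ)) * a s) ^ τ
      · rw [ENNReal.ofReal_tsum_of_nonneg
          (fun s => Real.rpow_nonneg (mul_nonneg (Real.rpow_nonneg (by norm_num) _) (ha s)) _) hs]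
        exact le_of_eq (tsum_congr hconv)
      · rw [tsum_eq_zero_of_not_summable hs]
        simp
    calc (E k * ENNReal.ofReal (b k)) ^ θ
        ≤ (E k * (ENNReal.ofReal M * _)) ^ θ := ENNReal.rpow_le_rpow (mul_le_mul' le_rfl h1) hθ.le
      _ = ENNReal.ofReal M ^ θ * (E k * _) ^ θ := by
          rw [← mul_assoc, mul_comm (E k) (ENNReal.ofReal M), mul_assoc,
            ENNReal.mul_rpow_of_nonneg _ _ hθ.le]
  -- Step 2+3 : pointwise, reduce exponent τ to ρ and rewrite as a p-power
  have step23 : ∀ k : (Fin d → ℕ), (E k *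
      (∑' s : (Fin d → ℕ), ((2:ℝ≥0∞) ^ (-δ * ∑ i, ((k i - s i : ℕ) : ℝ)) * ENNReal.ofReal (a s)) ^ τ) ^ (1/τ)) ^ θ
      ≤ ((2:ℝ≥0∞) ^ (γ * ∑ i, (k i : ℝ)) *
          ∑' s : (Fin d → ℕ), (2:ℝ≥0∞) ^ (-(ε * ∑ i, ((k i - s i : ℕ) : ℝ))) * u s) ^ p := by
    intro k
    set X : (Fin d → ℕ) → ℝ≥0∞ :=
      fun s => (2:ℝ≥0∞) ^ (-δ * ∑ i, ((k i - s i : ℕ) : ℝ)) * ENNReal.ofReal (a s) with hX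
    have hXρ : ∀ s, X s ^ ρ = (2:ℝ≥0∞) ^ (-(ε * ∑ i, ((k i - s i : ℕ) : ℝ))) * u s := by
      intro s
      rw [hX, ENNReal.mul_rpow_of_nonneg _ _ hρ0.le, ← ENNReal.rpow_mul, hu]
      congr 2
      rw [hεdef]; ring
    have hemb : (∑' s, X s ^ τ) ^ (1/τ) ≤ (∑' s, X s ^ ρ) ^ (1/ρ) := lp_embed X hρ0 hρτ
    have hmono : (E k * (∑' s, X s ^ τ) ^ (1/τ)) ^ θ ≤ (E k * (∑' s, X s ^ ρ) ^ (1/ρ)) ^ θ :=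
      ENNReal.rpow_le_rpow (mul_le_mul' le_rfl hemb) hθ.le
    refine le_trans hmono (le_of_eq ?_)
    have hY : ∀ Y : ℝ≥0∞, (E k * Y ^ (1/ρ)) ^ θ = ((2:ℝ≥0∞) ^ (γ * ∑ i, (k i : ℝ)) * Y) ^ p := by
      intro Y
      rw [ENNReal.mul_rpow_of_nonneg _ _ hθ.le, ENNReal.mul_rpow_of_nonneg _ _ hp0.le, hE,
        ← ENNReal.rpow_mul, ← ENNReal.rpow_mul, ← ENNReal.rpow_mul]
      congr 2
      · rw [hγdef, hpdef]; field_simp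
      · rw [hpdef]; ring
    rw [hY]
    congr 2
    exact tsum_congr hXρ
  -- Step 5 : rewrite the right-hand side of the core inequality
  have step5 : ∀ k : (Fin d → ℕ),
      ((2:ℝ≥0∞) ^ (γ * ∑ i, (k i : ℝ)) * u k) ^ p = (E k * ENNReal.ofReal (a k)) ^ θ := by
    intro k
    rw [ENNReal.mul_rpow_of_nonneg _ _ hθ.le, ENNReal.mul_rpow_of_nonneg _ _ hp0.le, hE, hu,
      ← ENNReal.rpow_mul, ← ENNReal.rpow_mul, ← ENNReal.rpow_mul]
    congr 2
    · rw [hγdef, hpdef]; field_simp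
    · rw [hpdef]; field_simp
  -- Put the ENNReal chain together
  have hTbTa : Tb ≤ ENNReal.ofReal M ^ θ * (A ^ p * Ta) := by
    calc Tb ≤ ∑' k : (Fin d → ℕ), ENNReal.ofReal M ^ θ * (E k *
          (∑' s : (Fin d → ℕ), ((2:ℝ≥0∞) ^ (-δ * ∑ i, ((k i - s i : ℕ) : ℝ)) * ENNReal.ofReal (a s)) ^ τ) ^ (1/τ)) ^ θ :=
          ENNReal.tsum_le_tsum step1
      _ = ENNReal.ofReal M ^ θ * ∑' k : (Fin d → ℕ), (E k *
          (∑' s : (Fin d → ℕ), ((2:ℝ≥0∞) ^ (-δ * ∑ i, ((k i - s i : ℕ) : ℝ)) * ENNReal.ofReal (a s)) ^ τ) ^ (1/τ)) ^ θ :=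
          ENNReal.tsum_mul_left
      _ ≤ ENNReal.ofReal M ^ θ * ∑' k : (Fin d → ℕ), ((2:ℝ≥0∞) ^ (γ * ∑ i, (k i : ℝ)) *
          ∑' s : (Fin d → ℕ), (2:ℝ≥0∞) ^ (-(ε * ∑ i, ((k i - s i : ℕ) : ℝ))) * u s) ^ p :=
          mul_le_mul' le_rfl (ENNReal.tsum_le_tsum step23)
      _ ≤ ENNReal.ofReal M ^ θ * (A ^ p * ∑' k : (Fin d → ℕ),
          ((2:ℝ≥0∞) ^ (γ * ∑ i, (k i : ℝ)) * u k) ^ p) := mul_le_mul' le_rfl (hcore u)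
      _ = ENNReal.ofReal M ^ θ * (A ^ p * Ta) := by
          rw [hTa]
          congr 2
          exact tsum_congr step5
  -- finiteness
  have hRHS_top : ENNReal.ofReal M ^ θ * (A ^ p * Ta) ≠ ⊤ := by
    rw [hTa_eq]
    exact ENNReal.mul_ne_top (ENNReal.rpow_ne_top_of_nonneg hθ.le ENNReal.ofReal_ne_top)
      (ENNReal.mul_ne_top hAp_top ENNReal.ofReal_ne_top)
  have hTb_top : Tb ≠ ⊤ := ne_top_of_le_ne_top hRHS_top hTbTa
  -- back to the reals
  have hreal_b : (∑' k : (Fin d → ℕ), ((2:ℝ) ^ (β * ∑ i, (k i : ℝ)) * b k) ^ θ) = Tb.toReal := by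
    rw [hTb, ENNReal.tsum_toReal_eq (fun k => by rw [← conv b hb k]; exact ENNReal.ofReal_ne_top)]
    refine tsum_congr fun k => ?_
    rw [← conv b hb k, ENNReal.toReal_ofReal
      (Real.rpow_nonneg (mul_nonneg (Real.rpow_nonneg (by norm_num) _) (hb k)) _)]
  have hfinal : (∑' k : (Fin d → ℕ), ((2:ℝ) ^ (β * ∑ i, (k i : ℝ)) * b k) ^ θ)
      ≤ M ^ θ * ((A ^ p).toReal * Sa) := by
    rw [hreal_b]
    refine le_trans (ENNReal.toReal_mono hRHS_top hTbTa) (le_of_eq ?_)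
    rw [hTa_eq, ENNReal.toReal_mul, ENNReal.toReal_mul, ← ENNReal.toReal_rpow,
      ENNReal.toReal_ofReal hM, ENNReal.toReal_ofReal hSa0]
  -- take the 1/θ power
  have hLHS0 : 0 ≤ ∑' k : (Fin d → ℕ), ((2:ℝ) ^ (β * ∑ i, (k i : ℝ)) * b k) ^ θ :=
    tsum_nonneg fun k => Real.rpow_nonneg
      (mul_nonneg (Real.rpow_nonneg (by norm_num) _) (hb k)) _
  calc (∑' k : (Fin d → ℕ), ((2:ℝ) ^ (β * ∑ i, (k i : ℝ)) * b k) ^ θ) ^ (1/θ)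
      ≤ (M ^ θ * ((A ^ p).toReal * Sa)) ^ (1/θ) :=
        Real.rpow_le_rpow hLHS0 hfinal (by positivity)
    _ = (A ^ p).toReal ^ (1/θ) * M * Sa ^ (1/θ) := by
        rw [Real.mul_rpow (Real.rpow_nonneg hM _) (mul_nonneg (by linarith) hSa0),
          Real.mul_rpow (by linarith) hSa0, one_div, Real.rpow_rpow_inv hM hθ.ne']
        ring
end

section
/- Let M(x) = max(1-|x|,0) be the hat function and for k ∈ ℤ_+ let Q_k(f)(x) = ∑_{s=0}^{2^k} f(2^{-k}s) M(2^k x - s) be the piecewise linear interpolant of f : [0,1] → ℝ. Then for every continuous f on [0,1] and every x ∈ [0,1], |f(x) - Q_k(f)(x)| ≤ ω_2(f, 2^{-k}), where ω_2(f,t) = sup_{0<h≤t} sup{|f(y) - 2f(y+h) + f(y+2h)| : y, y+2h ∈ [0,1]} is the second modulus of smoothness. -/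
/-- The second modulus of smoothness in the sup norm on `[0,1]`. -/
noncomputable def omega2 (f : ℝ → ℝ) (t : ℝ) : ℝ :=
  sSup {v | ∃ h y : ℝ, 0 < h ∧ h ≤ t ∧ 0 ≤ y ∧ y + 2 * h ≤ 1 ∧
    v = |f y - 2 * f (y + h) + f (y + 2 * h)|}

lemma omega2_bddAbove (f : ℝ → ℝ) (hf : ContinuousOn f (Set.Icc 0 1)) (t : ℝ) :
    BddAbove {v | ∃ h y : ℝ, 0 < h ∧ h ≤ t ∧ 0 ≤ y ∧ y + 2 * h ≤ 1 ∧
      v = |f y - 2 * f (y + h) + f (y + 2 * h)|} := by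
  obtain ⟨C, hC⟩ := isCompact_Icc.exists_bound_of_continuousOn hf
  refine ⟨4 * C, ?_⟩
  rintro v ⟨h, y, hh, hht, hy, hy2, rfl⟩
  have b1 := hC y ⟨hy, by linarith⟩
  have b2 := hC (y + h) ⟨by linarith, by linarith⟩
  have b3 := hC (y + 2 * h) ⟨by linarith, hy2⟩
  rw [Real.norm_eq_abs] at b1 b2 b3
  obtain ⟨c1, d1⟩ := abs_le.mp b1
  obtain ⟨c2, d2⟩ := abs_le.mp b2
  obtain ⟨c3, d3⟩ := abs_le.mp b3
  exact abs_le.mpr ⟨by linarith, by linarith⟩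

lemma tri_aux (u v : ℝ) (hvu : |v| ≤ |u|) : |u| ≤ |v - 2 * u| := by
  have h1 : |2 * u| - |v| ≤ |2 * u - v| := abs_sub_abs_le_abs_sub _ _
  have h2 : |2 * u - v| = |v - 2 * u| := abs_sub_comm _ _
  have h3 : |2 * u| = 2 * |u| := by rw [abs_mul]; norm_num
  linarith

lemma key_interp (f : ℝ → ℝ) (hf : ContinuousOn f (Set.Icc 0 1))
    (a b : ℝ) (ha : 0 ≤ a) (hb : b ≤ 1) (hab : a < b)
    (x : ℝ) (hx : x ∈ Set.Icc a b) :
    |f x - ((1 - (x - a) / (b - a)) * f a + (x - a) / (b - a) * f b)|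
      ≤ omega2 f (b - a) := by
  have hba : (0:ℝ) < b - a := by linarith
  set S := {v | ∃ h y : ℝ, 0 < h ∧ h ≤ b - a ∧ 0 ≤ y ∧ y + 2 * h ≤ 1 ∧
    v = |f y - 2 * f (y + h) + f (y + 2 * h)|} with hS
  have hbdd : BddAbove S := omega2_bddAbove f hf (b - a)
  set g : ℝ → ℝ := fun y => f y - ((1 - (y - a) / (b - a)) * f a + (y - a) / (b - a) * f b)
    with hg
  have hga : g a = 0 := by simp [hg]
  have hgb : g b = 0 := by
    simp only [hg]
    rw [div_self (ne_of_gt hba)]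
    ring
  have hsub : Set.Icc a b ⊆ Set.Icc (0:ℝ) 1 := Set.Icc_subset_Icc ha hb
  have hgc : ContinuousOn (fun y => |g y|) (Set.Icc a b) := by
    apply ContinuousOn.abs
    apply ContinuousOn.sub (hf.mono hsub)
    fun_prop
  obtain ⟨z, hz, hmax⟩ := isCompact_Icc.exists_isMaxOn (Set.nonempty_Icc.mpr hab.le) hgc
  have hM : ∀ y ∈ Set.Icc a b, |g y| ≤ |g z| := hmax
  have hnn : 0 ≤ sSup S := by
    have hmem : |f a - 2 * f (a + (b - a) / 2) + f (a + 2 * ((b - a) / 2))| ∈ S :=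
      ⟨(b - a) / 2, a, by linarith, by linarith, ha, by linarith, rfl⟩
    exact le_trans (abs_nonneg _) (le_csSup hbdd hmem)
  show |g x| ≤ sSup S
  have hzS : |g z| ≤ sSup S := by
    by_cases hza : z = a
    · rw [hza, hga, abs_zero]; exact hnn
    by_cases hzb : z = b
    · rw [hzb, hgb, abs_zero]; exact hnn
    have hz1 : a < z := lt_of_le_of_ne hz.1 (Ne.symm hza)
    have hz2 : z < b := lt_of_le_of_ne hz.2 hzb
    rcases le_or_gt (2 * z) (a + b) with hcase | hcase
    · -- step from the left endpoint
      have e1 : a + (z - a) = z := by ring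
      have key1 : f a - 2 * f (a + (z - a)) + f (a + 2 * (z - a))
          = g (a + 2 * (z - a)) - 2 * g z := by
        rw [e1]; simp only [hg]; ring
      have hmem : |f a - 2 * f (a + (z - a)) + f (a + 2 * (z - a))| ∈ S :=
        ⟨z - a, a, by linarith, by linarith, ha, by linarith, rfl⟩
      have hle := le_csSup hbdd hmem
      rw [key1] at hle
      have hw : a + 2 * (z - a) ∈ Set.Icc a b := ⟨by linarith, by linarith⟩
      have := tri_aux (g z) (g (a + 2 * (z - a))) (hM _ hw)
      linarith
    · -- step from the right endpoint
      have e1 : (2 * z - b) + (b - z) = z := by ring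
      have e2 : (2 * z - b) + 2 * (b - z) = b := by ring
      have key2 : f (2 * z - b) - 2 * f ((2 * z - b) + (b - z)) + f ((2 * z - b) + 2 * (b - z))
          = g (2 * z - b) - 2 * g z := by
        have hne : b - a ≠ 0 := ne_of_gt hba
        rw [e1, e2]; simp only [hg]; field_simp; ring
      have hmem : |f (2 * z - b) - 2 * f ((2 * z - b) + (b - z))
          + f ((2 * z - b) + 2 * (b - z))| ∈ S :=
        ⟨b - z, 2 * z - b, by linarith, by linarith, by linarith, by linarith, rfl⟩
      have hle := le_csSup hbdd hmem
      rw [key2] at hle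
      have hw : 2 * z - b ∈ Set.Icc a b := ⟨by linarith, by linarith⟩
      have := tri_aux (g z) (g (2 * z - b)) (hM _ hw)
      linarith
  exact le_trans (hM x hx) hzS

/-- The piecewise linear interpolant at step `2^{-k}` approximates a continuous `f`
within `ω₂(f, 2^{-k})` on `[0,1]`. -/
theorem piecewise_linear_interpolant_error (f : ℝ → ℝ)
    (hf : ContinuousOn f (Set.Icc 0 1)) (k : ℕ) (x : ℝ) (hx : x ∈ Set.Icc (0 : ℝ) 1) :
    |f x - ∑ s ∈ Finset.range (2 ^ k + 1),
        f ((s : ℝ) / 2 ^ k) * max (1 - |(2 : ℝ) ^ k * x - s|) 0|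
      ≤ omega2 f (((2 : ℝ) ^ k)⁻¹) := by
  obtain ⟨hx0, hx1⟩ := hx
  set N : ℕ := 2 ^ k with hN
  have hN1 : 1 ≤ N := Nat.one_le_two_pow
  have hNr : ((N : ℕ) : ℝ) = (2:ℝ) ^ k := by rw [hN]; push_cast; ring
  rw [← hNr]
  have hNpos : (0:ℝ) < (N:ℝ) := by positivity
  set s₀ : ℕ := min (⌊(N:ℝ) * x⌋₊) (N - 1) with hs₀
  have hs3 : s₀ + 1 ≤ N := by
    have : s₀ ≤ N - 1 := min_le_right _ _
    omega
  have hs1 : (s₀ : ℝ) ≤ (N:ℝ) * x := by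
    have h1 : s₀ ≤ ⌊(N:ℝ) * x⌋₊ := min_le_left _ _
    have h2 : ((⌊(N:ℝ) * x⌋₊ : ℕ) : ℝ) ≤ (N:ℝ) * x := Nat.floor_le (by positivity)
    calc (s₀:ℝ) ≤ ((⌊(N:ℝ) * x⌋₊ : ℕ) : ℝ) := by exact_mod_cast h1
      _ ≤ _ := h2
  have hxN : (N:ℝ) * x ≤ (N:ℝ) := by nlinarith
  have hs2 : (N:ℝ) * x ≤ (s₀:ℝ) + 1 := by
    rcases le_or_gt (⌊(N:ℝ) * x⌋₊) (N - 1) with h | h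
    · have he : s₀ = ⌊(N:ℝ) * x⌋₊ := min_eq_left h
      rw [he]
      exact (Nat.lt_floor_add_one _).le
    · have he : s₀ = N - 1 := min_eq_right (by omega)
      have : ((s₀:ℕ) : ℝ) + 1 = (N:ℝ) := by
        rw [he]
        have : ((N - 1 : ℕ) : ℝ) = (N:ℝ) - 1 := by
          rw [Nat.cast_sub hN1]; norm_num
        rw [this]; ring
      linarith
  have ht0 : 0 ≤ (N:ℝ) * x - s₀ := by linarith
  have ht1 : (N:ℝ) * x - s₀ ≤ 1 := by linarith
  have hs3r : (s₀ : ℝ) + 1 ≤ (N:ℝ) := by exact_mod_cast hs3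
  -- the sum reduces to two terms
  have hsum : (∑ s ∈ Finset.range (N + 1),
        f ((s : ℝ) / (N:ℝ)) * max (1 - |(N:ℝ) * x - s|) 0)
      = f ((s₀ : ℝ) / (N:ℝ)) * max (1 - |(N:ℝ) * x - (s₀:ℝ)|) 0
        + f (((s₀:ℝ) + 1) / (N:ℝ)) * max (1 - |(N:ℝ) * x - ((s₀:ℝ) + 1)|) 0 := by
    have := Finset.sum_eq_add_of_mem (s := Finset.range (N + 1))
      (f := fun s : ℕ => f ((s : ℝ) / (N:ℝ)) * max (1 - |(N:ℝ) * x - s|) 0)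
      s₀ (s₀ + 1) (Finset.mem_range.mpr (by omega)) (Finset.mem_range.mpr (by omega))
      (by omega) ?_
    · rw [this]; push_cast; ring_nf
    · rintro c hc ⟨hc1, hc2⟩
      have h1 : 1 ≤ |(N:ℝ) * x - c| := by
        rcases Nat.lt_or_ge c s₀ with hlt | hge
        · have : (c : ℝ) + 1 ≤ (s₀ : ℝ) := by exact_mod_cast hlt
          have := le_abs_self ((N:ℝ) * x - c)
          linarith
        · have hge2 : s₀ + 2 ≤ c := by omega
          have : (s₀ : ℝ) + 2 ≤ (c : ℝ) := by exact_mod_cast hge2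
          have h2 := le_abs_self ((c:ℝ) - (N:ℝ) * x)
          rw [abs_sub_comm] at h2
          linarith
      have h0 : max (1 - |(N:ℝ) * x - c|) 0 = 0 := max_eq_right (by linarith)
      simp only [h0, mul_zero]
  rw [hsum]
  have hhat1 : max (1 - |(N:ℝ) * x - (s₀:ℝ)|) 0 = 1 - ((N:ℝ) * x - s₀) := by
    rw [abs_of_nonneg ht0]
    exact max_eq_left (by linarith)
  have hhat2 : max (1 - |(N:ℝ) * x - ((s₀:ℝ) + 1)|) 0 = (N:ℝ) * x - s₀ := by
    have : |(N:ℝ) * x - ((s₀:ℝ) + 1)| = 1 - ((N:ℝ) * x - s₀) := by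
      rw [abs_of_nonpos (by linarith)]; ring
    rw [this]
    have e : 1 - (1 - ((N:ℝ) * x - s₀)) = (N:ℝ) * x - s₀ := by ring
    rw [e]
    exact max_eq_left ht0
  rw [hhat1, hhat2]
  -- apply the single-interval lemma
  have ha0 : 0 ≤ (s₀ : ℝ) / (N:ℝ) := by positivity
  have hb1 : ((s₀:ℝ) + 1) / (N:ℝ) ≤ 1 := by
    rw [div_le_one hNpos]; exact hs3r
  have hab : (s₀ : ℝ) / (N:ℝ) < ((s₀:ℝ) + 1) / (N:ℝ) := by
    rw [div_lt_div_iff₀ hNpos hNpos]; nlinarith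
  have hxa : (s₀ : ℝ) / (N:ℝ) ≤ x := by
    rw [div_le_iff₀ hNpos, mul_comm]; exact hs1
  have hxb : x ≤ ((s₀:ℝ) + 1) / (N:ℝ) := by
    rw [le_div_iff₀ hNpos, mul_comm]; exact hs2
  have hkey := key_interp f hf ((s₀:ℝ) / (N:ℝ)) (((s₀:ℝ) + 1) / (N:ℝ))
    ha0 hb1 hab x ⟨hxa, hxb⟩
  have e1 : ((s₀:ℝ) + 1) / (N:ℝ) - (s₀:ℝ) / (N:ℝ) = ((N:ℝ))⁻¹ := by
    field_simp
    ring
  rw [e1] at hkey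
  have e2 : (x - (s₀:ℝ) / (N:ℝ)) / ((N:ℝ))⁻¹ = (N:ℝ) * x - (s₀:ℝ) := by
    field_simp
  rw [e2] at hkey
  have efin : f ((s₀:ℝ) / (N:ℝ)) * (1 - ((N:ℝ) * x - s₀))
      + f (((s₀:ℝ) + 1) / (N:ℝ)) * ((N:ℝ) * x - s₀)
      = (1 - ((N:ℝ) * x - s₀)) * f ((s₀:ℝ) / (N:ℝ))
        + ((N:ℝ) * x - s₀) * f (((s₀:ℝ) + 1) / (N:ℝ)) := by ring
  rw [efin]
  exact hkey
end
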